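/- Let G be a finitely generated group acting on a tree T such that every element g ∈ G fixes some point of T (every cyclic subgroup has nonempty fixed point set). Then G has a global fixed point: T^G ≠ ∅. -/

import Mathlib

open SimpleGraph

namespace Serre19

variable {G V : Type*} [Group G] [MulAction G V] [DecidableEq V] {T : SimpleGraph V}

/-- Betweenness in a graph metric. -/
def Btw (T : SimpleGraph V) (x m y : V) : Prop :=
  T.dist x m + T.dist m y = T.dist x y

/-- A set is convex if it contains every vertex between two of its points. -/
def Conv (T : SimpleGraph V) (A : Set V) : Prop :=
  ∀ x ∈ A, ∀ y ∈ A, ∀ m, Btw T x m y → m ∈ A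

section Tree

variable (hT : T.IsTree)
include hT

/-- In a tree, every path is a geodesic. -/
lemma path_length_eq {u v : V} {p : T.Walk u v} (hp : p.IsPath) :
    p.length = T.dist u v := by
  obtain ⟨w, hw⟩ := hT.isConnected.exists_walk_length_eq_dist u v
  have hb : w.bypass.IsPath := w.bypass_isPath
  have h1 : w.bypass.length ≤ w.length := w.length_bypass_le
  have h2 : T.dist u v ≤ w.bypass.length := SimpleGraph.dist_le _
  have he : p = w.bypass := (hT.existsUnique_path u v).unique hp hb
  rw [he]; omega

lemma exists_geodesic (u v : V) :
    ∃ p : T.Walk u v, p.IsPath ∧ p.length = T.dist u v := by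
  obtain ⟨w, hw⟩ := hT.isConnected.exists_walk_length_eq_dist u v
  exact ⟨w.bypass, w.bypass_isPath, path_length_eq hT w.bypass_isPath⟩

lemma dist_eq_zero {u v : V} (h : T.dist u v = 0) : u = v :=
  (hT.isConnected.dist_eq_zero_iff.mp h)

lemma btw_of_mem {x y m : V} {p : T.Walk x y} (hp : p.IsPath) (hm : m ∈ p.support) :
    Btw T x m y := by
  have h1 := hp.takeUntil hm
  have h2 := hp.dropUntil hm
  have hlen := congrArg SimpleGraph.Walk.length (p.take_spec hm)
  rw [SimpleGraph.Walk.length_append] at hlen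
  unfold Btw
  rw [← path_length_eq hT h1, ← path_length_eq hT h2, ← path_length_eq hT hp]
  exact hlen

lemma append_isPath {x y z : V} {p : T.Walk x y} {q : T.Walk y z}
    (hp : p.IsPath) (hq : q.IsPath)
    (h : ∀ v, v ∈ p.support → v ∈ q.support → v = y) : (p.append q).IsPath := by
  rw [SimpleGraph.Walk.isPath_def, SimpleGraph.Walk.support_append]
  have hq' := q.support_eq_cons
  have hqn : q.support.Nodup := hq.support_nodup
  rw [hq'] at hqn
  rcases List.nodup_cons.mp hqn with ⟨hy, htail⟩
  refine List.Nodup.append hp.support_nodup htail ?_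
  intro v hv1 hv2
  have : v ∈ q.support := by rw [hq']; exact List.mem_cons_of_mem _ hv2
  have := h v hv1 this
  subst this
  exact hy hv2

lemma mem_of_btw {x y m : V} (h : Btw T x m y) {p : T.Walk x y} (hp : p.IsPath) :
    m ∈ p.support := by
  obtain ⟨p1, hp1, hl1⟩ := exists_geodesic hT x m
  obtain ⟨p2, hp2, hl2⟩ := exists_geodesic hT m y
  set w := p1.append p2 with hw
  have hwl : w.length = T.dist x y := by
    rw [hw, SimpleGraph.Walk.length_append, hl1, hl2]; exact h
  have hle : w.length ≤ w.bypass.length := by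
    have := SimpleGraph.dist_le w.bypass
    omega
  have hwp : w.IsPath := by
    have := w.bypass_eq_self_of_length_le hle
    rw [← this]; exact w.bypass_isPath
  have : p = w := (hT.existsUnique_path x y).unique hp hwp
  rw [this, hw, SimpleGraph.Walk.mem_support_append_iff]
  exact Or.inl p1.end_mem_support

lemma btw_unique {x y m m' : V} (h : Btw T x m y) (h' : Btw T x m' y)
    (hd : T.dist x m = T.dist x m') : m = m' := by
  obtain ⟨p, hp, -⟩ := exists_geodesic hT x y
  have hm := mem_of_btw hT h hp
  have hm' := mem_of_btw hT h' hp
  have hsp := p.take_spec hm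
  have : m' ∈ (p.takeUntil m hm).support ∨ m' ∈ (p.dropUntil m hm).support := by
    have : m' ∈ ((p.takeUntil m hm).append (p.dropUntil m hm)).support := by
      rw [hsp]; exact hm'
    rwa [SimpleGraph.Walk.mem_support_append_iff] at this
  rcases this with hc | hc
  · have hb : Btw T x m' m := btw_of_mem hT (hp.takeUntil hm) hc
    unfold Btw at hb
    have : T.dist m' m = 0 := by omega
    exact (dist_eq_zero hT this).symm
  · have hb : Btw T m m' y := btw_of_mem hT (hp.dropUntil hm) hc
    unfold Btw at h h' hb
    have : T.dist m m' = 0 := by omega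
    exact dist_eq_zero hT this

/-- In a tree, any three vertices have a median. -/
lemma first_hit {c a : V} (W : T.Walk c a) (S : Set V) (ha : a ∈ S) :
    ∃ m, m ∈ S ∧ m ∈ W.support ∧ ∃ W₁ : T.Walk c m,
      (∀ v ∈ W₁.support, v ∈ S → v = m) ∧ (∀ v ∈ W₁.support, v ∈ W.support) := by
  clear hT
  induction W with
  | nil =>
    exact ⟨_, ha, by simp, SimpleGraph.Walk.nil, by simp, by simp⟩
  | @cons c d a h q ih =>
    by_cases hc : c ∈ S
    · refine ⟨c, hc, by simp, SimpleGraph.Walk.nil, ?_, by simp⟩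
      intro v hv _
      simpa using hv
    · obtain ⟨m, hmS, hmW, W₁, honly, hsub⟩ := ih ha
      refine ⟨m, hmS, by simp [hmW], SimpleGraph.Walk.cons h W₁, ?_, ?_⟩
      · intro v hv hvS
        rcases (by simpa using hv : v = c ∨ v ∈ W₁.support) with rfl | hv'
        · exact absurd hvS hc
        · exact honly v hv' hvS
      · intro v hv
        rcases (by simpa using hv : v = c ∨ v ∈ W₁.support) with rfl | hv'
        · simp
        · simp [hsub v hv']

lemma median (a b c : V) : ∃ m, Btw T a m b ∧ Btw T b m c ∧ Btw T c m a := by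
  obtain ⟨P, hP, -⟩ := exists_geodesic hT a b
  obtain ⟨Wca, hWca, -⟩ := exists_geodesic hT c a
  obtain ⟨m, hmP, hmW, W₁, honly, hsub⟩ :=
    first_hit hT Wca {v | v ∈ P.support} P.start_mem_support
  refine ⟨m, btw_of_mem hT hP hmP, ?_, btw_of_mem hT hWca hmW⟩
  -- build a path from b to c through m
  have hQ1 : ((P.dropUntil m hmP).reverse).IsPath := (hP.dropUntil hmP).reverse
  have hQ2 : (W₁.bypass.reverse).IsPath := W₁.bypass_isPath.reverse
  have hap : (((P.dropUntil m hmP).reverse).append (W₁.bypass.reverse)).IsPath := by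
    refine append_isPath hT hQ1 hQ2 ?_
    intro v hv1 hv2
    have hv1' : v ∈ P.support := by
      rw [SimpleGraph.Walk.support_reverse, List.mem_reverse] at hv1
      exact P.support_dropUntil_subset hmP hv1
    have hv2' : v ∈ W₁.support := by
      rw [SimpleGraph.Walk.support_reverse, List.mem_reverse] at hv2
      exact W₁.support_bypass_subset hv2
    exact honly v hv2' hv1'
  have hmm : m ∈ (((P.dropUntil m hmP).reverse).append (W₁.bypass.reverse)).support := by
    rw [SimpleGraph.Walk.mem_support_append_iff]
    left
    rw [SimpleGraph.Walk.support_reverse, List.mem_reverse]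
    exact (P.dropUntil m hmP).start_mem_support
  exact btw_of_mem hT hap hmm

lemma helly3 {A B C : Set V} (cA : Conv T A) (cB : Conv T B) (cC : Conv T C)
    (hAB : (A ∩ B).Nonempty) (hAC : (A ∩ C).Nonempty) (hBC : (B ∩ C).Nonempty) :
    (A ∩ B ∩ C).Nonempty := by
  obtain ⟨a, haB, haC⟩ := hBC
  obtain ⟨b, hbA, hbC⟩ := hAC
  obtain ⟨c, hcA, hcB⟩ := hAB
  obtain ⟨m, h1, h2, h3⟩ := median hT a b c
  refine ⟨m, ⟨?_, ?_⟩, ?_⟩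
  · exact cA b hbA c hcA m h2
  · exact cB c hcB a haB m h3
  · exact cC a haC b hbC m h1

lemma hellyF {α : Type*} (F : Finset α) (A : α → Set V)
    (hconv : ∀ i ∈ F, Conv T (A i))
    (hpair : ∀ i ∈ F, ∀ j ∈ F, (A i ∩ A j).Nonempty) (hne : F.Nonempty) :
    (⋂ i ∈ F, A i).Nonempty := by
  classical
  induction F using Finset.induction_on generalizing A with
  | empty => exact absurd hne (by simp)
  | @insert a F' ha ih =>
    rcases F'.eq_empty_or_nonempty with rfl | hF'
    · obtain ⟨v, hv, -⟩ := hpair a (by simp) a (by simp)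
      exact ⟨v, by simpa using hv⟩
    · have hconv' : ∀ i ∈ F', Conv T (A i ∩ A a) := by
        intro i hi x hx y hy m hm
        exact ⟨hconv i (by simp [hi]) x hx.1 y hy.1 m hm,
               hconv a (by simp) x hx.2 y hy.2 m hm⟩
      have hpair' : ∀ i ∈ F', ∀ j ∈ F', ((A i ∩ A a) ∩ (A j ∩ A a)).Nonempty := by
        intro i hi j hj
        have := helly3 hT (hconv i (by simp [hi])) (hconv j (by simp [hj]))
          (hconv a (by simp))
          (hpair i (by simp [hi]) j (by simp [hj]))
          (hpair i (by simp [hi]) a (by simp))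
          (hpair j (by simp [hj]) a (by simp))
        obtain ⟨v, ⟨⟨h1, h2⟩, h3⟩⟩ := this
        exact ⟨v, ⟨h1, h3⟩, ⟨h2, h3⟩⟩
      obtain ⟨v, hv⟩ := ih (fun i => A i ∩ A a) hconv' hpair' hF'
      simp only [Set.mem_iInter] at hv
      refine ⟨v, ?_⟩
      simp only [Set.mem_iInter, Finset.mem_insert]
      rintro i (rfl | hi)
      · obtain ⟨i₀, hi₀⟩ := hF'
        exact (hv i₀ hi₀).2
      · exact (hv i hi).1

end Tree

section Action

variable (hT : T.IsTree)
variable (hact : ∀ (g : G) (u v : V), T.Adj u v → T.Adj (g • u) (g • v))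
include hT hact

/-- The graph homomorphism induced by `g`. -/
def hom (hact : ∀ (g : G) (u v : V), T.Adj u v → T.Adj (g • u) (g • v)) (g : G) :
    T →g T := ⟨fun v => g • v, fun {u v} h => hact g u v h⟩

lemma dist_smul (g : G) (u v : V) : T.dist (g • u) (g • v) = T.dist u v := by
  have key : ∀ (g : G) (u v : V), T.dist (g • u) (g • v) ≤ T.dist u v := by
    intro g u v
    obtain ⟨p, hp, hl⟩ := exists_geodesic hT u v
    have := SimpleGraph.dist_le (p.map (hom hact g))
    rwa [SimpleGraph.Walk.length_map, hl] at this
  refine le_antisymm (key g u v) ?_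
  have := key g⁻¹ (g • u) (g • v)
  simpa [inv_smul_smul] using this

lemma btw_smul (g : G) {x m y : V} (h : Btw T x m y) :
    Btw T (g • x) (g • m) (g • y) := by
  unfold Btw at h ⊢
  rw [dist_smul hT hact, dist_smul hT hact, dist_smul hT hact]
  exact h

lemma fix_convex (g : G) : Conv T {v | g • v = v} := by
  intro x hx y hy m hm
  have hb : Btw T x (g • m) y := by
    have := btw_smul hT hact g hm
    rwa [hx, hy] at this
  have hd : T.dist x m = T.dist x (g • m) := by
    conv_rhs => rw [← hx]
    rw [dist_smul hT hact]
  exact (btw_unique hT hm hb hd).symm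

/-- Serre's midpoint lemma: if `g` has a fixed point, then the nearest fixed
point to `x` is the midpoint of the geodesic from `x` to `g • x`. -/
lemma midpoint {g : G} (hg : ∃ v : V, g • v = v) (x : V) :
    ∃ p : V, g • p = p ∧ Btw T x p (g • x) ∧ 2 * T.dist x p = T.dist x (g • x) := by
  have hne : {n | ∃ p, g • p = p ∧ T.dist x p = n}.Nonempty :=
    ⟨T.dist x hg.choose, hg.choose, hg.choose_spec, rfl⟩
  obtain ⟨p, hp, hk⟩ := Nat.sInf_mem hne
  set k := sInf {n | ∃ p, g • p = p ∧ T.dist x p = n} with hkdef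
  have hmin : ∀ q, g • q = q → k ≤ T.dist x q := fun q hq => Nat.sInf_le ⟨q, hq, rfl⟩
  obtain ⟨A, hA, hAl⟩ := exists_geodesic hT x p
  have hArev : (A.reverse.map (hom hact g)).IsPath :=
    SimpleGraph.Walk.map_isPath_of_injective (MulAction.injective g) hA.reverse
  set C : T.Walk p (g • x) := (A.reverse.map (hom hact g)).copy (by rw [hom]; exact hp) (by rw [hom]; rfl)
    with hCdef
  have hC : C.IsPath := by rw [hCdef, SimpleGraph.Walk.isPath_copy]; exact hArev
  have hCsupp : ∀ v ∈ C.support, ∃ u ∈ A.support, g • u = v := by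
    intro v hv
    rw [hCdef, SimpleGraph.Walk.support_copy, SimpleGraph.Walk.support_map,
      SimpleGraph.Walk.support_reverse] at hv
    obtain ⟨u, hu, huv⟩ := List.mem_map.mp hv
    exact ⟨u, List.mem_reverse.mp hu, huv⟩
  have hkey : ∀ v, v ∈ A.support → v ∈ C.support → v = p := by
    intro v hvA hvC
    obtain ⟨u, huA, huv⟩ := hCsupp v hvC
    have hbv : Btw T x v p := btw_of_mem hT hA hvA
    have hbu : Btw T x u p := btw_of_mem hT hA huA
    have hvp : T.dist v p = T.dist u p := by
      rw [← huv, ← hp, dist_smul hT hact, hp]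
    have hxvu : T.dist x v = T.dist x u := by
      unfold Btw at hbv hbu; omega
    have huveq : v = u := btw_unique hT hbv hbu hxvu
    have hvfix : g • v = v := by rw [huveq] at huv ⊢; exact huv
    have h1 : k ≤ T.dist x v := hmin v hvfix
    unfold Btw at hbv
    have : T.dist v p = 0 := by omega
    exact dist_eq_zero hT this
  have hW : (A.append C).IsPath := append_isPath hT hA hC hkey
  have hWlen : (A.append C).length = 2 * k := by
    rw [SimpleGraph.Walk.length_append, hCdef, SimpleGraph.Walk.length_copy,
      SimpleGraph.Walk.length_map, SimpleGraph.Walk.length_reverse, hAl, hk]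
    omega
  have hdist : T.dist x (g • x) = 2 * k := by
    rw [← path_length_eq hT hW, hWlen]
  refine ⟨p, hp, ?_, by rw [hdist, hk]⟩
  refine btw_of_mem hT hW ?_
  rw [SimpleGraph.Walk.mem_support_append_iff]
  exact Or.inl A.end_mem_support

/-- Serre's Proposition 26 (contrapositive form): if `g`, `h` and `g*h` all
have fixed points, then `g` and `h` have a common fixed point. -/
lemma prop26 {g h : G} (hg : ∃ v : V, g • v = v) (hh : ∃ v : V, h • v = v)
    (hgh : ∃ v : V, (g * h) • v = v) :
    ∃ p : V, g • p = p ∧ h • p = p := by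
  obtain ⟨q, hq⟩ := hh
  obtain ⟨p, hpfix, hpbtw, hpd⟩ := midpoint hT hact hg q
  obtain ⟨p', hp'fix, hp'btw, hp'd⟩ := midpoint hT hact hgh q
  have hghq : (g * h) • q = g • q := by rw [mul_smul, hq]
  rw [hghq] at hp'btw hp'd
  have hdpq : T.dist q p = T.dist q p' := by omega
  have hpp' : p = p' := btw_unique hT hpbtw hp'btw hdpq
  subst hpp'
  refine ⟨p, hpfix, ?_⟩
  have : h • p = g⁻¹ • ((g * h) • p) := by
    rw [mul_smul, inv_smul_smul]
  rw [this, hp'fix]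
  exact inv_smul_eq_iff.mpr hpfix.symm

end Action

end Serre19

/-- Serre's fixed point theorem: if a finitely generated group `G` acts on a
tree `T` (by graph automorphisms, without inversions) so that every element of
`G` fixes some vertex, then `G` has a global fixed vertex. -/
theorem stmt19 (G V : Type*) [Group G] (T : SimpleGraph V) (hT : T.IsTree)
    [MulAction G V]
    (hact : ∀ (g : G) (u v : V), T.Adj u v → T.Adj (g • u) (g • v))
    (hnoinv : ∀ (g : G) (u v : V), T.Adj u v → ¬(g • u = v ∧ g • v = u))
    (hfg : Group.FG G)
    (hfix : ∀ g : G, ∃ v : V, g • v = v) :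
    ∃ v : V, ∀ g : G, g • v = v := by
  classical
  obtain ⟨S, hS⟩ := hfg
  rcases S.eq_empty_or_nonempty with rfl | hSne
  · obtain ⟨v, -⟩ := hfix 1
    refine ⟨v, fun g => ?_⟩
    have hbot : (⊥ : Subgroup G) = ⊤ := by
      rw [← Subgroup.closure_empty]
      simpa using hS
    have : g ∈ (⊥ : Subgroup G) := by rw [hbot]; trivial
    rw [Subgroup.mem_bot] at this
    rw [this, one_smul]
  · have hhelly := Serre19.hellyF hT S (fun s => {v : V | s • v = v})
      (fun s _ => Serre19.fix_convex hT hact s)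
      (fun a _ b _ => by
        obtain ⟨p, hp1, hp2⟩ := Serre19.prop26 hT hact (hfix a) (hfix b) (hfix (a * b))
        exact ⟨p, hp1, hp2⟩)
      hSne
    obtain ⟨v, hv⟩ := hhelly
    simp only [Set.mem_iInter, Set.mem_setOf_eq] at hv
    refine ⟨v, fun g => ?_⟩
    have hg : g ∈ Subgroup.closure (S : Set G) := by rw [hS]; trivial
    refine Subgroup.closure_induction (fun x hx => hv x hx) (one_smul G v)
      (fun x y _ _ hx hy => by rw [mul_smul, hy, hx])
      (fun x _ hx => by rw [← hx, inv_smul_smul, hx]) hg
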